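/- Let E be a Dedekind complete Φ-algebra with unit e, and let r be a weak order unit of E. Then the bands B_m generated by ((r − (1/m)e)⁺) for m ∈ ℕ increase to E, and consequently, for every u ∈ E⁺, the net (P_m(u))_{m∈ℕ} of band projections applied to u increases to u. -/

import Mathlib

variable {E : Type*}

section Defs
variable [Lattice E] [AddCommGroup E] [CovariantClass E E (· + ·) (· ≤ ·)]

/-- The disjoint complement of a set. -/
def dComp (A : Set E) : Set E := {x | ∀ a ∈ A, |x| ⊓ |a| = 0}

/-- A band (in a space with the projection property) is a set equal to its double
disjoint complement. -/
def IsBand (B : Set E) : Prop := dComp (dComp B) = B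

/-- The band generated by an element. -/
def bandGen (u : E) : Set E := dComp (dComp ({u} : Set E))

/-- `P` is the band projection onto `B`: every `x` decomposes as `P x ∈ B` plus
`x - P x ∈ Bᵈ`. -/
def IsBandProjection (B : Set E) (P : E → E) : Prop :=
  (∀ x, P x ∈ B) ∧ (∀ x, x - P x ∈ dComp B)

/-- `u` is a weak order unit of the band `B`. -/
def IsWeakUnitOf (B : Set E) (u : E) : Prop :=
  u ∈ B ∧ 0 ≤ u ∧ ∀ z ∈ B, u ⊓ |z| = 0 → z = 0

/-- `u` is a weak order unit of `E`. -/
def IsWeakUnit (u : E) : Prop := 0 ≤ u ∧ ∀ z : E, u ⊓ |z| = 0 → z = 0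

end Defs

section Aux
variable [Lattice E] [AddCommGroup E] [CovariantClass E E (· + ·) (· ≤ ·)]

lemma dComp_antitone' {A B : Set E} (h : A ⊆ B) : dComp B ⊆ dComp A :=
  fun x hx a ha => hx a (h ha)

lemma subset_ddComp' (A : Set E) : A ⊆ dComp (dComp A) :=
  fun x hx a ha => by rw [inf_comm]; exact ha x hx

lemma dComp_triple (A : Set E) : dComp (dComp (dComp A)) = dComp A :=
  le_antisymm (dComp_antitone' (subset_ddComp' A)) (subset_ddComp' (dComp A))

lemma inf_add_le3 {a b c : E} (ha : 0 ≤ a) (hb : 0 ≤ b) (hc : 0 ≤ c) :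
    a ⊓ (b + c) ≤ a ⊓ b + a ⊓ c := by
  set x := a ⊓ (b + c) with hx
  have h1 : x - a ⊓ c ≤ a ⊓ b := by
    have hrw : x - a ⊓ c = (x - a) ⊔ (x - c) := by
      rw [sub_eq_add_neg, neg_inf, add_sup, ← sub_eq_add_neg, ← sub_eq_add_neg]
    rw [hrw]
    refine sup_le (le_inf ?_ ?_) (le_inf ?_ ?_)
    · exact le_trans (sub_nonpos.2 inf_le_left) ha
    · exact le_trans (sub_nonpos.2 inf_le_left) hb
    · exact le_trans (sub_le_self _ hc) inf_le_left
    · exact sub_le_iff_le_add.2 inf_le_right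
  calc x = (x - a ⊓ c) + a ⊓ c := by abel
    _ ≤ a ⊓ b + a ⊓ c := add_le_add_left h1 _

lemma mem_dComp_singleton' {v x : E} (hv : 0 ≤ v) :
    x ∈ dComp ({v} : Set E) ↔ |x| ⊓ v = 0 := by
  constructor
  · intro h
    have := h v rfl
    rwa [abs_of_nonneg hv] at this
  · intro h a ha
    rw [Set.mem_singleton_iff] at ha
    subst ha
    rwa [abs_of_nonneg hv]

lemma dComp_neg_mem' {A : Set E} {x : E} (hx : x ∈ dComp A) : -x ∈ dComp A := by
  intro a ha
  rw [abs_neg]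
  exact hx a ha

lemma dComp_add_mem' {A : Set E} {x y : E} (hx : x ∈ dComp A) (hy : y ∈ dComp A) :
    x + y ∈ dComp A := by
  intro a ha
  have h3 : |a| ⊓ |x| = 0 := by rw [inf_comm]; exact hx a ha
  have h4 : |a| ⊓ |y| = 0 := by rw [inf_comm]; exact hy a ha
  have h5 : |x + y| ⊓ |a| ≤ 0 :=
    calc |x + y| ⊓ |a| ≤ (|x| + |y|) ⊓ |a| := inf_le_inf_right _ (abs_add_le x y)
      _ = |a| ⊓ (|x| + |y|) := inf_comm _ _
      _ ≤ |a| ⊓ |x| + |a| ⊓ |y| := inf_add_le3 (abs_nonneg a) (abs_nonneg x) (abs_nonneg y)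
      _ = 0 := by rw [h3, h4, add_zero]
  exact le_antisymm h5 (le_inf (abs_nonneg _) (abs_nonneg _))

lemma disj_pos_left' {b d : E} (h : |b| ⊓ |d| = 0) (hbd : 0 ≤ b + d) : 0 ≤ b := by
  have hnb : -b ≤ d := by
    have h' := add_le_add_left hbd (-b)
    simpa using h'
  have h1 : b⁻ ≤ |d| := by
    rw [negPart_def]
    exact sup_le (le_trans hnb (le_abs_self d)) (abs_nonneg d)
  have h2 : b⁻ ≤ |b| := by
    rw [negPart_def]
    exact sup_le (neg_le_abs b) (abs_nonneg b)
  have h3 : b⁻ ≤ 0 := by rw [← h]; exact le_inf h2 h1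
  exact negPart_eq_zero.mp (le_antisymm h3 (negPart_nonneg b))

end Aux

lemma arch_zero' [ConditionallyCompleteLattice E] [AddCommGroup E]
    [CovariantClass E E (· + ·) (· ≤ ·)] [Module ℝ E]
    {t y : E} (ht : 0 ≤ t) (h : ∀ n : ℕ, (n : ℝ) • t ≤ y) : t = 0 := by
  have hne : (Set.range fun n : ℕ => (n : ℝ) • t).Nonempty := ⟨_, ⟨0, rfl⟩⟩
  have hbdd : BddAbove (Set.range fun n : ℕ => (n : ℝ) • t) :=
    ⟨y, by rintro _ ⟨n, rfl⟩; exact h n⟩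
  set s := sSup (Set.range fun n : ℕ => (n : ℝ) • t) with hs
  have key : ∀ n : ℕ, (n : ℝ) • t ≤ s - t := by
    intro n
    have h1 : ((n + 1 : ℕ) : ℝ) • t ≤ s := le_csSup hbdd ⟨n + 1, rfl⟩
    have h2 : ((n + 1 : ℕ) : ℝ) • t = (n : ℝ) • t + t := by
      push_cast
      rw [add_smul, one_smul]
    rw [h2] at h1
    exact le_sub_iff_add_le.2 h1
  have hss : s ≤ s - t := csSup_le hne (by rintro _ ⟨n, rfl⟩; exact key n)
  exact le_antisymm ((le_sub_self_iff s).mp hss) ht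

/-- for a weak order unit `r` in a Dedekind complete Φ-algebra, the
bands `B_{(1/m)e ≤ r}` increase to `E`, and `P_m u ↑ u` for every `u ≥ 0`. -/
theorem stmt9 [ConditionallyCompleteLattice E] [CommRing E]
    [CovariantClass E E (· + ·) (· ≤ ·)] [Module ℝ E] [PosSMulMono ℝ E]
    (hmulpos : ∀ a b : E, 0 ≤ a → 0 ≤ b → 0 ≤ a * b)
    (hfalg : ∀ a b c : E, a ⊓ b = 0 → 0 ≤ c → (c * a) ⊓ b = 0)
    (r : E) (hr : IsWeakUnit r)
    (Bm : ℕ → Set E)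
    (hBm : ∀ m : ℕ,
      Bm m = dComp (bandGen ((((m : ℝ) + 1)⁻¹ • (1 : E) - r) ⊔ 0)))
    (Pm : ℕ → E → E) (hPm : ∀ m, IsBandProjection (Bm m) (Pm m)) :
    (∀ m n : ℕ, m ≤ n → Bm m ⊆ Bm n) ∧
    (∀ B : Set E, IsBand B → (∀ m, Bm m ⊆ B) → B = Set.univ) ∧
    (∀ u : E, 0 ≤ u →
      Monotone (fun m => Pm m u) ∧ IsLUB (Set.range fun m => Pm m u) u) := by
  -- the multiplicative unit is positive
  have hone : (0 : E) ≤ 1 := by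
    have h0 : (1 : E)⁺ ⊓ (1 : E)⁻ = 0 := posPart_inf_negPart_eq_zero 1
    have hp : ((1 : E)⁻ * (1 : E)⁺) ⊓ (1 : E)⁻ = 0 := hfalg _ _ _ h0 (negPart_nonneg 1)
    have hq : 0 ≤ (1 : E)⁻ * (1 : E)⁻ := hmulpos _ _ (negPart_nonneg 1) (negPart_nonneg 1)
    have heq : (1 : E)⁻ * (1 : E)⁺ - (1 : E)⁻ * (1 : E)⁻ = (1 : E)⁻ := by
      rw [← mul_sub, posPart_sub_negPart, mul_one]
    have hle : (1 : E)⁻ ≤ (1 : E)⁻ * (1 : E)⁺ := by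
      have h2 : (1 : E)⁻ * (1 : E)⁺ - (1 : E)⁻ * (1 : E)⁻ ≤ (1 : E)⁻ * (1 : E)⁺ :=
        sub_le_self _ hq
      rwa [heq] at h2
    have h1 : (1 : E)⁻ ≤ 0 := by
      rw [← hp]
      exact le_inf hle le_rfl
    exact negPart_eq_zero.mp (le_antisymm h1 (negPart_nonneg 1))
  set c : ℕ → E := fun m => ((m : ℝ) + 1)⁻¹ • (1 : E) with hc
  set v : ℕ → E := fun m => (c m - r) ⊔ 0 with hv
  set w : ℕ → E := fun m => (r - c m) ⊔ 0 with hw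
  have hc_nonneg : ∀ m, 0 ≤ c m := by
    intro m
    have h1 : ((m : ℝ) + 1)⁻¹ • (0 : E) ≤ ((m : ℝ) + 1)⁻¹ • (1 : E) :=
      smul_le_smul_of_nonneg_left hone (by positivity)
    rwa [smul_zero] at h1
  have hv_nonneg : ∀ m, 0 ≤ v m := fun m => le_sup_right
  have hw_nonneg : ∀ m, 0 ≤ w m := fun m => le_sup_right
  have hBm' : ∀ m x, x ∈ Bm m ↔ |x| ⊓ v m = 0 := by
    intro m x
    rw [hBm m]
    have h1 : dComp (bandGen (v m)) = dComp ({v m} : Set E) := by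
      unfold bandGen
      exact dComp_triple _
    rw [show ((((m : ℝ) + 1)⁻¹ • (1 : E) - r) ⊔ 0) = v m from rfl, h1]
    exact mem_dComp_singleton' (hv_nonneg m)
  have hcanti : ∀ {m n : ℕ}, m ≤ n → c n ≤ c m := by
    intro m n h
    have hinv : ((n : ℝ) + 1)⁻¹ ≤ ((m : ℝ) + 1)⁻¹ := by
      apply inv_anti₀ (by positivity)
      have : (m : ℝ) ≤ (n : ℝ) := Nat.cast_le.mpr h
      linarith
    have hs : (0 : ℝ) ≤ ((m : ℝ) + 1)⁻¹ - ((n : ℝ) + 1)⁻¹ := by linarith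
    have hd : 0 ≤ (((m : ℝ) + 1)⁻¹ - ((n : ℝ) + 1)⁻¹) • (1 : E) := by
      have h1 := smul_le_smul_of_nonneg_left hone hs
      rwa [smul_zero] at h1
    have heq : c n = c m - (((m : ℝ) + 1)⁻¹ - ((n : ℝ) + 1)⁻¹) • (1 : E) := by
      simp only [hc, sub_smul]
      abel
    rw [heq]
    exact sub_le_self _ hd
  have hvanti : ∀ {m n : ℕ}, m ≤ n → v n ≤ v m := by
    intro m n h
    exact sup_le_sup_right (sub_le_sub_right (hcanti h) r) 0
  have part1 : ∀ m n : ℕ, m ≤ n → Bm m ⊆ Bm n := by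
    intro m n hmn x hx
    rw [hBm' m x] at hx
    rw [hBm' n x]
    refine le_antisymm ?_ (le_inf (abs_nonneg x) (hv_nonneg n))
    calc |x| ⊓ v n ≤ |x| ⊓ v m := inf_le_inf_left _ (hvanti hmn)
      _ = 0 := hx
  -- w m belongs to Bm m
  have hw_mem : ∀ m, w m ∈ Bm m := by
    intro m
    rw [hBm' m, abs_of_nonneg (hw_nonneg m)]
    have h := posPart_inf_negPart_eq_zero (r - c m)
    simpa [posPart_def, negPart_def, neg_sub, hw, hv] using h
  have hr_le : ∀ m, r ≤ w m + c m := by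
    intro m
    have : r - c m ≤ w m := le_sup_left
    exact sub_le_iff_le_add.mp this
  -- key disjointness lemma: anything positive disjoint from all `w m` is disjoint from `r`
  have hdisj_r : ∀ t : E, 0 ≤ t → (∀ m, t ⊓ w m = 0) → t ⊓ r = 0 := by
    intro t ht hdis
    have ht' : 0 ≤ t ⊓ r := le_inf ht hr.1
    have hb : ∀ m : ℕ, t ⊓ r ≤ c m := by
      intro m
      calc t ⊓ r ≤ t ⊓ (w m + c m) := inf_le_inf_left t (hr_le m)
        _ ≤ t ⊓ w m + t ⊓ c m := inf_add_le3 ht (hw_nonneg m) (hc_nonneg m)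
        _ = t ⊓ c m := by rw [hdis m, zero_add]
        _ ≤ c m := inf_le_right
    have hbn : ∀ n : ℕ, (n : ℝ) • (t ⊓ r) ≤ 1 := by
      intro n
      have h1 : ((n : ℝ) + 1) • (t ⊓ r) ≤ ((n : ℝ) + 1) • c n :=
        smul_le_smul_of_nonneg_left (hb n) (by positivity)
      have h2 : ((n : ℝ) + 1) • c n = 1 := by
        rw [hc]
        simp only
        rw [smul_smul, mul_inv_cancel₀ (by positivity : ((n : ℝ) + 1) ≠ 0), one_smul]
      have h3 : (n : ℝ) • (t ⊓ r) ≤ ((n : ℝ) + 1) • (t ⊓ r) := by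
        rw [add_smul, one_smul]
        exact le_add_of_nonneg_right ht'
      calc (n : ℝ) • (t ⊓ r) ≤ ((n : ℝ) + 1) • (t ⊓ r) := h3
        _ ≤ ((n : ℝ) + 1) • c n := h1
        _ = 1 := h2
    exact arch_zero' ht' hbn
  refine ⟨part1, ?_, ?_⟩
  · -- any band containing all the Bm is everything
    intro B hB hsub
    have key : ∀ z ∈ dComp B, z = 0 := by
      intro z hz
      apply hr.2
      rw [inf_comm]
      apply hdisj_r |z| (abs_nonneg z)
      intro m
      have h1 := hz (w m) (hsub m (hw_mem m))
      rwa [abs_of_nonneg (hw_nonneg m)] at h1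
    refine Set.eq_univ_iff_forall.2 fun x => ?_
    rw [← hB]
    intro a ha
    rw [key a ha, abs_zero]
    exact inf_eq_right.2 (abs_nonneg x)
  · -- the band projections increase to the identity on positives
    intro u hu
    have hbB : ∀ m, Pm m u ∈ Bm m := fun m => (hPm m).1 u
    have hdB : ∀ m, u - Pm m u ∈ dComp (Bm m) := fun m => (hPm m).2 u
    have hdisj : ∀ m, |Pm m u| ⊓ |u - Pm m u| = 0 := by
      intro m
      have h1 := hdB m (Pm m u) (hbB m)
      rwa [inf_comm] at h1
    have hbpos : ∀ m, 0 ≤ Pm m u := by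
      intro m
      refine disj_pos_left' (hdisj m) ?_
      rw [add_sub_cancel]
      exact hu
    have hdpos : ∀ m, 0 ≤ u - Pm m u := by
      intro m
      refine disj_pos_left' (by rw [inf_comm]; exact hdisj m) ?_
      rw [sub_add_cancel]
      exact hu
    have hble : ∀ m, Pm m u ≤ u := fun m => sub_nonneg.mp (hdpos m)
    constructor
    · -- monotonicity
      intro m n hmn
      simp only
      have h1 : Pm m u ∈ dComp (bandGen (v n)) := by
        have := part1 m n hmn (hbB m)
        rwa [hBm n] at this
      have h2 : Pm n u ∈ dComp (bandGen (v n)) := by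
        have := hbB n
        rwa [hBm n] at this
      have hcmem : Pm m u - Pm n u ∈ Bm n := by
        have hsum := dComp_add_mem' h1 (dComp_neg_mem' h2)
        rw [← sub_eq_add_neg] at hsum
        rw [hBm n]
        exact hsum
      have hcd : |u - Pm n u| ⊓ |Pm m u - Pm n u| = 0 := hdB n _ hcmem
      have hpc : (Pm m u - Pm n u)⁺ ≤ 0 := by
        rw [← hcd]
        refine le_inf ?_ ?_
        · rw [abs_of_nonneg (hdpos n), posPart_def]
          exact sup_le (sub_le_sub_right (hble m) _) (hdpos n)
        · rw [posPart_def]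
          exact sup_le (le_abs_self _) (abs_nonneg _)
      have hc0 : (Pm m u - Pm n u)⁺ = 0 := le_antisymm hpc (posPart_nonneg _)
      exact sub_nonpos.mp (posPart_eq_zero.mp hc0)
    · -- least upper bound
      constructor
      · rintro _ ⟨m, rfl⟩
        exact hble m
      · intro x hx
        set t := (u - x)⁺ with htdef
        have htw : ∀ m, t ⊓ w m = 0 := by
          intro m
          have h1 : t ≤ u - Pm m u := by
            rw [htdef, posPart_def]
            exact sup_le (sub_le_sub_left (hx (Set.mem_range_self m)) u) (hdpos m)
          have h2 : (u - Pm m u) ⊓ w m = 0 := by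
            have h3 := hdB m (w m) (hw_mem m)
            rwa [abs_of_nonneg (hdpos m), abs_of_nonneg (hw_nonneg m)] at h3
          refine le_antisymm ?_ (le_inf (posPart_nonneg _) (hw_nonneg m))
          calc t ⊓ w m ≤ (u - Pm m u) ⊓ w m := inf_le_inf_right _ h1
            _ = 0 := h2
        have htr := hdisj_r t (posPart_nonneg _) htw
        have ht0 : t = 0 := by
          apply hr.2
          rw [abs_of_nonneg (posPart_nonneg _), inf_comm]
          exact htr
        exact sub_nonpos.mp (posPart_eq_zero.mp ht0)
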